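/- Let n = l·q (l divides n) and let ∅ = C₀ ⊊ C₁ ⊊ ... ⊊ C_l = [n] be a chain with |C_i \ C_{i−1}| = q for each i. Color each H with C_{i−1} ⊊ H ⊊ C_i by color i (leaving the C_j uncolored). Then this partial l-coloring of 2^[n] admits no rainbow incomparable pair (no rainbow A₂), and each color class has size exactly 2^q − 2. -/

import Mathlib

theorem stmt15 (n l q : ℕ) (hn : n = l * q) (C : Fin (l + 1) → Finset (Fin n))
    (hmono : StrictMono C) (h0 : C 0 = ∅) (hlast : C (Fin.last l) = Finset.univ)
    (hsize : ∀ i : Fin l, (C i.succ \ C i.castSucc).card = q)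
    (c : Finset (Fin n) → Option (Fin l))
    (hc : ∀ (H : Finset (Fin n)) (i : Fin l),
      c H = some i ↔ C i.castSucc ⊂ H ∧ H ⊂ C i.succ) :
    (¬∃ (F G : Finset (Fin n)) (i j : Fin l),
      c F = some i ∧ c G = some j ∧ i ≠ j ∧ ¬F ⊆ G ∧ ¬G ⊆ F) ∧
    ∀ i : Fin l,
      (Finset.univ.filter fun H : Finset (Fin n) => c H = some i).card = 2 ^ q - 2 := by
  constructor
  · rintro ⟨F, G, i, j, hF, hG, hij, hFG, hGF⟩
    rw [hc] at hF hG
    rcases lt_or_gt_of_ne hij with h | h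
    · exact hFG (hF.2.subset.trans ((hmono.monotone
        (Fin.succ_le_castSucc_iff.mpr h)).trans hG.1.subset))
    · exact hGF (hG.2.subset.trans ((hmono.monotone
        (Fin.succ_le_castSucc_iff.mpr h)).trans hF.1.subset))
  · intro i
    have hsub : C i.castSucc ⊆ C i.succ :=
      (hmono (Fin.castSucc_lt_succ : i.castSucc < i.succ)).subset
    have : (Finset.univ.filter fun H : Finset (Fin n) => c H = some i)
        = Finset.Ioo (C i.castSucc) (C i.succ) := by
      ext H
      simp [hc, Finset.mem_Ioo]
    rw [this, Finset.card_Ioo_finset hsub]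
    congr 1
    rw [← hsize i, Finset.card_sdiff_of_subset hsub]
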